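/- Let (X,d) be a b-metric space with constant s ≥ 1 and (x_n) a sequence in X. Suppose there exist γ > log₂ s and a sequence (a_n) of positive reals such that the series Σ_{n≥1} a_n · d(x_n, x_{n+1}) converges and liminf_{n→∞} a_n / n^γ > 0. Then (x_n) is Cauchy. -/

import Mathlib

theorem bmetric_cauchy_of_summable_weights
    (X : Type*) (d : X → X → ℝ) (s : ℝ) (hs : 1 ≤ s)
    (hd_nonneg : ∀ x y, 0 ≤ d x y)
    (hd_eq : ∀ x y, d x y = 0 ↔ x = y)
    (hd_symm : ∀ x y, d x y = d y x)
    (hd_tri : ∀ x y z, d x y ≤ s * (d x z + d z y))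
    (x : ℕ → X) (γ : ℝ) (hγ : Real.logb 2 s < γ)
    (a : ℕ → ℝ) (ha : ∀ n, 0 < a n)
    (hsum : Summable (fun n : ℕ => a n * d (x n) (x (n + 1))))
    (hliminf : 0 < Filter.atTop.liminf (fun n : ℕ => a n / (n : ℝ) ^ γ)) :
    ∀ ε > 0, ∃ N : ℕ, ∀ m ≥ N, ∀ n ≥ N, d (x m) (x n) < ε := by
  intro ε hε
  have hs0 : (0:ℝ) < s := lt_of_lt_of_le one_pos hs
  set p : ℝ := Real.logb 2 s with hpdef
  have hp0 : 0 ≤ p := Real.logb_nonneg one_lt_two hs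
  have hs2 : (2:ℝ) ^ p = s := Real.rpow_logb two_pos (by norm_num) hs0
  set δ : ℝ := γ - p with hδdef
  have hδ0 : 0 < δ := sub_pos.2 hγ
  set D : ℕ → ℝ := fun k => d (x k) (x (k+1)) with hDdef
  have hDnn : ∀ k, 0 ≤ D k := fun k => hd_nonneg _ _
  set W : ℕ → ℝ := fun k => a k * D k with hWdef
  have hWnn : ∀ k, 0 ≤ W k := fun k => mul_nonneg (ha k).le (hDnn k)
  -- Lemma A: balanced dyadic splitting
  have lemA : ∀ t m L, L ≤ 2^t →
      d (x m) (x (m+L)) ≤ s^t * ∑ k ∈ Finset.Ico m (m+L), D k := by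
    intro t
    induction t with
    | zero =>
      intro m L hL
      interval_cases L
      · simp [(hd_eq _ _).2 rfl]
      · simp [hDdef]
    | succ t ih =>
      intro m L hL
      have hsumnn : (0:ℝ) ≤ ∑ k ∈ Finset.Ico m (m+L), D k :=
        Finset.sum_nonneg (fun k _ => hDnn k)
      by_cases h : L ≤ 2^t
      · calc d (x m) (x (m+L)) ≤ s^t * ∑ k ∈ Finset.Ico m (m+L), D k := ih m L h
          _ ≤ s^(t+1) * ∑ k ∈ Finset.Ico m (m+L), D k := by
              apply mul_le_mul_of_nonneg_right _ hsumnn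
              exact pow_le_pow_right₀ hs (by omega)
      · push_neg at h
        have h2 : 2^t ≤ L := h.le
        have hL2 : L - 2^t ≤ 2^t := by
          have : (2:ℕ)^(t+1) = 2^t + 2^t := by ring
          omega
        have e1 := ih m (2^t) le_rfl
        have e2 := ih (m + 2^t) (L - 2^t) hL2
        have hrw : m + 2^t + (L - 2^t) = m + L := by omega
        rw [hrw] at e2
        have tri := hd_tri (x m) (x (m+L)) (x (m + 2^t))
        have hsplit : ∑ k ∈ Finset.Ico m (m + 2^t), D k
            + ∑ k ∈ Finset.Ico (m + 2^t) (m + L), D k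
            = ∑ k ∈ Finset.Ico m (m+L), D k :=
          Finset.sum_Ico_consecutive _ (by omega) (by omega)
        calc d (x m) (x (m+L))
            ≤ s * (d (x m) (x (m + 2^t)) + d (x (m + 2^t)) (x (m+L))) := tri
          _ ≤ s * (s^t * ∑ k ∈ Finset.Ico m (m + 2^t), D k
                + s^t * ∑ k ∈ Finset.Ico (m + 2^t) (m + L), D k) := by
              apply mul_le_mul_of_nonneg_left _ hs0.le
              exact add_le_add e1 e2
          _ = s^(t+1) * ∑ k ∈ Finset.Ico m (m+L), D k := by
              rw [← hsplit]; ring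
  -- Lemma B: polynomial bound for a block
  have lemB : ∀ m L, 1 ≤ L →
      d (x m) (x (m+L)) ≤ (2*(L:ℝ))^p * ∑ k ∈ Finset.Ico m (m+L), D k := by
    intro m L hL
    set t := Nat.clog 2 L with ht
    have hLle : L ≤ 2^t := Nat.le_pow_clog (by norm_num) L
    have h2t : (2:ℕ)^t ≤ 2*L := by
      rcases eq_or_lt_of_le hL with hL1 | hL1
      · have hL1' : L = 1 := hL1.symm
        subst hL1'
        norm_num [ht, Nat.clog_one_right]
      · have hx : 1 < L := hL1
        have h1 := Nat.pow_pred_clog_lt_self (b := 2) (by norm_num) hx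
        rw [Nat.pred_eq_sub_one, ← ht] at h1
        have ht1 : 1 ≤ t := Nat.clog_pos (by norm_num) hx
        have h3 : (2:ℕ)^t = 2 * 2^(t-1) := by
          conv_lhs => rw [show t = (t-1)+1 by omega]
          ring
        omega
    have hst : s^t ≤ (2*(L:ℝ))^p := by
      have e1 : s^t = ((2:ℝ)^(t:ℕ)) ^ p := by
        rw [← hs2, ← Real.rpow_natCast ((2:ℝ)^p) t, ← Real.rpow_mul (by norm_num),
          mul_comm, Real.rpow_mul (by norm_num : (0:ℝ) ≤ 2), Real.rpow_natCast]
      rw [e1]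
      apply Real.rpow_le_rpow (by positivity) _ hp0
      calc ((2:ℝ)^(t:ℕ)) = ((2^t : ℕ) : ℝ) := by push_cast; ring
        _ ≤ ((2*L : ℕ) : ℝ) := by exact_mod_cast h2t
        _ = 2*(L:ℝ) := by push_cast; ring
    calc d (x m) (x (m+L)) ≤ s^t * ∑ k ∈ Finset.Ico m (m+L), D k := lemA t m L hLle
      _ ≤ (2*(L:ℝ))^p * ∑ k ∈ Finset.Ico m (m+L), D k :=
          mul_le_mul_of_nonneg_right hst (Finset.sum_nonneg fun k _ => hDnn k)
  -- chain lemma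
  have lemC : ∀ (J : ℕ) (u : ℕ → X),
      d (u 0) (u J) ≤ ∑ j ∈ Finset.range J, s^(j+1) * d (u j) (u (j+1)) := by
    intro J
    induction J with
    | zero => intro u; simp [(hd_eq _ _).2 rfl]
    | succ J ih =>
      intro u
      have tri := hd_tri (u 0) (u (J+1)) (u 1)
      have e2 := ih (fun j => u (j+1))
      calc d (u 0) (u (J+1)) ≤ s * (d (u 0) (u 1) + d (u 1) (u (J+1))) := tri
        _ ≤ s * (d (u 0) (u 1)
              + ∑ j ∈ Finset.range J, s^(j+1) * d (u (j+1)) (u (j+2))) := by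
            apply mul_le_mul_of_nonneg_left _ hs0.le
            exact add_le_add (le_refl _) e2
        _ = ∑ j ∈ Finset.range (J+1), s^(j+1) * d (u j) (u (j+1)) := by
            rw [Finset.sum_range_succ' (fun j => s^(j+1) * d (u j) (u (j+1))) J,
              mul_add, Finset.mul_sum, add_comm]
            congr 1
            · exact Finset.sum_congr rfl fun j _ => by ring
            · ring
  -- extract liminf constant
  set lim := Filter.atTop.liminf (fun n : ℕ => a n / (n : ℝ) ^ γ) with hlim
  set c : ℝ := lim / 2 with hcdef
  have hc0 : 0 < c := by positivity
  have hbdd : Filter.IsBoundedUnder (· ≥ ·) Filter.atTop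
      (fun n : ℕ => a n / (n : ℝ) ^ γ) :=
    Filter.isBoundedUnder_of ⟨0, fun n => div_nonneg (ha n).le (Real.rpow_nonneg n.cast_nonneg γ)⟩
  have hev : ∀ᶠ n in Filter.atTop, c < a n / (n : ℝ) ^ γ :=
    Filter.eventually_lt_of_lt_liminf (by rw [hcdef]; linarith) hbdd
  obtain ⟨N₀, hN₀⟩ := Filter.eventually_atTop.1 hev
  have hak : ∀ k, N₀ ≤ k → c * (k:ℝ)^γ ≤ a k := by
    intro k hk
    have h1 := hN₀ k hk
    rcases Nat.eq_zero_or_pos k with hk0 | hk0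
    · subst hk0
      have hγ0 : 0 < γ := lt_of_le_of_lt hp0 (by rw [hpdef] at *; linarith)
      rw [Nat.cast_zero, Real.zero_rpow hγ0.ne', mul_zero]
      exact (ha 0).le
    · have hkpos : (0:ℝ) < (k:ℝ)^γ := Real.rpow_pos_of_pos (by exact_mod_cast hk0) γ
      rw [lt_div_iff₀ hkpos] at h1
      exact h1.le
  -- choose ratio R
  obtain ⟨r, hr⟩ := exists_nat_ge (s ^ (1/δ))
  set R : ℕ := max r 2 with hRdef
  have hR2 : 2 ≤ R := le_max_right _ _
  have hRs : s ≤ (R:ℝ)^δ := by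
    have h1 : s ^ (1/δ) ≤ (R:ℝ) := le_trans hr (by exact_mod_cast le_max_left r 2)
    calc s = (s ^ (1/δ)) ^ δ := by
          rw [← Real.rpow_mul hs0.le, one_div_mul_cancel hδ0.ne', Real.rpow_one]
      _ ≤ (R:ℝ)^δ := Real.rpow_le_rpow (Real.rpow_nonneg hs0.le _) h1 hδ0.le
  -- constant
  set C : ℝ := s * (2*(R:ℝ))^p / c with hCdef
  have hC0 : 0 < C := by
    have : (0:ℝ) < (2*(R:ℝ))^p := Real.rpow_pos_of_pos (by positivity) p
    positivity
  have hCc : C * c = s * (2*(R:ℝ))^p := by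
    rw [hCdef, div_mul_cancel₀ _ hc0.ne']
  -- tail bound
  have htail : Filter.Tendsto (fun i => ∑' k, W (k + i)) Filter.atTop (nhds 0) :=
    tendsto_sum_nat_add W
  obtain ⟨N₁, hN₁⟩ := Filter.eventually_atTop.1 (htail.eventually_lt_const
    (show (0:ℝ) < ε / C by positivity))
  -- key estimate
  have key : ∀ m n : ℕ, max N₀ 1 ≤ m → m < n → d (x m) (x n) ≤ C * ∑' k, W (k + m) := by
    intro m n hm hmn
    have hm1 : 1 ≤ m := le_trans (le_max_right _ _) hm
    have hmN₀ : N₀ ≤ m := le_trans (le_max_left _ _) hm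
    set tf : ℕ → ℕ := fun j => min (m * R^j) n with htf
    have htf0 : tf 0 = m := by simp [htf, Nat.min_eq_left hmn.le]
    have htfn : tf n = n := by
      have h1 : n < 2^n := Nat.lt_two_pow_self
      have h2 : (2:ℕ)^n ≤ R^n := Nat.pow_le_pow_left hR2 n
      have h3 : R^n ≤ m * R^n := Nat.le_mul_of_pos_left (R^n) (show 0 < m by omega)
      have h4 : n ≤ m * R^n := by omega
      simp [htf, Nat.min_eq_right h4]
    have htfmono : ∀ j, tf j ≤ tf (j+1) := by
      intro j
      apply min_le_min _ le_rfl
      apply Nat.mul_le_mul_left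
      exact Nat.pow_le_pow_right (by omega) (by omega)
    -- per-segment bound
    have seg : ∀ j, s^(j+1) * d (x (tf j)) (x (tf (j+1)))
        ≤ C * ∑ k ∈ Finset.Ico (tf j) (tf (j+1)), W k := by
      intro j
      rcases eq_or_lt_of_le (htfmono j) with heq | hlt
      · rw [← heq]
        rw [(hd_eq _ _).2 rfl, mul_zero]
        apply mul_nonneg hC0.le
        exact Finset.sum_nonneg fun k _ => hWnn k
      · -- tf j < tf (j+1) ≤ n, hence tf j = m * R^j
        have hjlt : tf j < n := lt_of_lt_of_le hlt (min_le_right _ _)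
        have htfj : tf j = m * R^j := by
          rcases le_or_gt (m * R^j) n with h1 | h1
          · exact min_eq_left h1
          · exfalso
            have h2 : tf j = n := min_eq_right h1.le
            omega
        set M := m * R^j with hM
        set L := tf (j+1) - tf j with hL
        have hL1 : 1 ≤ L := by omega
        have hML : tf (j+1) = M + L := by omega
        have hLub : L ≤ R * M := by
          have h1 : tf (j+1) ≤ m * R^(j+1) := min_le_left _ _
          have h2 : m * R^(j+1) = R * M := by rw [hM]; ring
          omega
        have hblock := lemB M L hL1
        rw [← hML] at hblock
        rw [← htfj] at hblock
        -- per-edge weight bound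
        have edge : ∀ k ∈ Finset.Ico (tf j) (tf (j+1)),
            s^(j+1) * ((2*(L:ℝ))^p * D k) ≤ C * W k := by
          intro k hk
          rw [Finset.mem_Ico] at hk
          have hkM : M ≤ k := by rw [← htfj]; exact hk.1
          have hmM : m ≤ M := Nat.le_mul_of_pos_right m (Nat.pow_pos (by omega) : 0 < R^j)
          have hk1 : 1 ≤ k := le_trans (le_trans hm1 hmM) hkM
          have hkpos : (0:ℝ) < (k:ℝ) := by exact_mod_cast hk1
          -- s^j ≤ k^δ
          have hsj : s^j ≤ (k:ℝ)^δ := by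
            have h1 : (R:ℕ)^j ≤ k := le_trans (Nat.le_mul_of_pos_left _ (by omega)) hkM
            calc s^j ≤ ((R:ℝ)^δ)^j := pow_le_pow_left₀ hs0.le hRs j
              _ = (((R:ℝ))^(j:ℕ))^δ := by
                  rw [← Real.rpow_natCast ((R:ℝ)^δ) j, ← Real.rpow_mul (by positivity),
                    mul_comm, Real.rpow_mul (by positivity), Real.rpow_natCast]
              _ ≤ (k:ℝ)^δ := by
                  apply Real.rpow_le_rpow (by positivity) _ hδ0.le
                  calc ((R:ℝ))^(j:ℕ) = ((R^j : ℕ):ℝ) := by push_cast; ring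
                    _ ≤ (k:ℝ) := by exact_mod_cast h1
          -- (2L)^p ≤ (2R)^p * k^p
          have hLp : (2*(L:ℝ))^p ≤ (2*(R:ℝ))^p * (k:ℝ)^p := by
            rw [← Real.mul_rpow (by positivity) hkpos.le]
            apply Real.rpow_le_rpow (by positivity) _ hp0
            have : (L:ℝ) ≤ (R:ℝ) * (k:ℝ) := by
              have h2 : (L:ℕ) ≤ R * k := le_trans hLub (Nat.mul_le_mul_left R hkM)
              exact_mod_cast h2
            nlinarith
          have hkγ : (k:ℝ)^δ * (k:ℝ)^p = (k:ℝ)^γ := by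
            rw [← Real.rpow_add hkpos]; congr 1; rw [hδdef]; ring
          have hwt : s^(j+1) * (2*(L:ℝ))^p ≤ C * a k := by
            have h1 : s^(j+1) * (2*(L:ℝ))^p ≤ s * ((k:ℝ)^δ * ((2*(R:ℝ))^p * (k:ℝ)^p)) := by
              have e : s^(j+1) = s * s^j := by ring
              rw [e]
              have h2 : s^j * (2*(L:ℝ))^p ≤ (k:ℝ)^δ * ((2*(R:ℝ))^p * (k:ℝ)^p) := by
                apply mul_le_mul hsj hLp (by positivity) (by positivity)
              calc s * s^j * (2*(L:ℝ))^p = s * (s^j * (2*(L:ℝ))^p) := by ring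
                _ ≤ s * ((k:ℝ)^δ * ((2*(R:ℝ))^p * (k:ℝ)^p)) :=
                    mul_le_mul_of_nonneg_left h2 hs0.le
            have h3 : s * ((k:ℝ)^δ * ((2*(R:ℝ))^p * (k:ℝ)^p)) = (C * c) * (k:ℝ)^γ := by
              rw [hCc, ← hkγ]; ring
            have h4 : (C * c) * (k:ℝ)^γ = C * (c * (k:ℝ)^γ) := by ring
            have h5 : C * (c * (k:ℝ)^γ) ≤ C * a k :=
              mul_le_mul_of_nonneg_left (hak k (by omega)) hC0.le
            linarith
          calc s^(j+1) * ((2*(L:ℝ))^p * D k) = (s^(j+1) * (2*(L:ℝ))^p) * D k := by ring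
            _ ≤ (C * a k) * D k := mul_le_mul_of_nonneg_right hwt (hDnn k)
            _ = C * W k := by rw [hWdef]; ring
        calc s^(j+1) * d (x (tf j)) (x (tf (j+1)))
            ≤ s^(j+1) * ((2*(L:ℝ))^p * ∑ k ∈ Finset.Ico (tf j) (tf (j+1)), D k) := by
              apply mul_le_mul_of_nonneg_left hblock (by positivity)
          _ = ∑ k ∈ Finset.Ico (tf j) (tf (j+1)), s^(j+1) * ((2*(L:ℝ))^p * D k) := by
              rw [Finset.mul_sum, Finset.mul_sum]
          _ ≤ ∑ k ∈ Finset.Ico (tf j) (tf (j+1)), C * W k := Finset.sum_le_sum edge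
          _ = C * ∑ k ∈ Finset.Ico (tf j) (tf (j+1)), W k := by rw [Finset.mul_sum]
    -- sum over segments
    have hIco : ∀ J : ℕ, ∑ j ∈ Finset.range J, (∑ k ∈ Finset.Ico (tf j) (tf (j+1)), W k)
        = ∑ k ∈ Finset.Ico (tf 0) (tf J), W k := by
      intro J
      induction J with
      | zero => simp
      | succ J ihJ =>
        rw [Finset.sum_range_succ, ihJ]
        apply Finset.sum_Ico_consecutive
        · -- tf 0 ≤ tf J
          clear ihJ
          induction J with
          | zero => exact le_rfl
          | succ J ih2 => exact le_trans ih2 (htfmono J)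
        · exact htfmono J
    have main : d (x m) (x n) ≤ C * ∑ k ∈ Finset.Ico m n, W k := by
      have h1 := lemC n (fun j => x (tf j))
      simp only [htf0, htfn] at h1
      calc d (x m) (x n) ≤ ∑ j ∈ Finset.range n, s^(j+1) * d (x (tf j)) (x (tf (j+1))) := h1
        _ ≤ ∑ j ∈ Finset.range n, C * ∑ k ∈ Finset.Ico (tf j) (tf (j+1)), W k :=
            Finset.sum_le_sum (fun j _ => seg j)
        _ = C * ∑ j ∈ Finset.range n, ∑ k ∈ Finset.Ico (tf j) (tf (j+1)), W k := by
            rw [Finset.mul_sum]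
        _ = C * ∑ k ∈ Finset.Ico m n, W k := by rw [hIco n, htf0, htfn]
    have hfin : ∑ k ∈ Finset.Ico m n, W k ≤ ∑' k, W (k + m) := by
      rw [Finset.sum_Ico_eq_sum_range]
      have hsummable : Summable (fun k => W (k + m)) := (summable_nat_add_iff m).2 hsum
      calc ∑ i ∈ Finset.range (n - m), W (m + i)
          = ∑ i ∈ Finset.range (n - m), W (i + m) := by
            apply Finset.sum_congr rfl; intro i _; rw [add_comm]
        _ ≤ ∑' k, W (k + m) :=
            Summable.sum_le_tsum _ (fun i _ => hWnn _) hsummable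
    calc d (x m) (x n) ≤ C * ∑ k ∈ Finset.Ico m n, W k := main
      _ ≤ C * ∑' k, W (k + m) := mul_le_mul_of_nonneg_left hfin hC0.le
  -- finish
  refine ⟨max (max N₀ 1) N₁, fun m hm n hn => ?_⟩
  have htailm : ∀ q, max (max N₀ 1) N₁ ≤ q → C * ∑' k, W (k + q) < ε := by
    intro q hq
    have h1 : ∑' k, W (k + q) < ε / C := hN₁ q (le_trans (le_max_right _ _) hq)
    calc C * ∑' k, W (k + q) < C * (ε / C) :=
        mul_lt_mul_of_pos_left h1 hC0
      _ = ε := by field_simp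
  rcases lt_trichotomy m n with h | h | h
  · exact lt_of_le_of_lt (key m n (le_trans (le_max_left _ _) hm) h) (htailm m hm)
  · rw [h, (hd_eq _ _).2 rfl]; exact hε
  · rw [hd_symm]
    exact lt_of_le_of_lt (key n m (le_trans (le_max_left _ _) hn) h) (htailm n hn)
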